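/- Let G=(V,E) be a connected simple graph not isomorphic to a star, and let G'=(V',E') = σ(G). Let S ⊊ V' be a vertex set with M ∪ {z1,z2} ⊆ S. Then a vertex e ∈ M is satisfied in G'[S] (i.e., d_S(e)·|V'∖S| ≥ d_{V'∖S}(e)·(|S|−1)) if and only if d_S(e) ≥ |S|−2. -/

import Mathlib

open SimpleGraph

/-- Number of neighbors of `v` inside `T`. -/
noncomputable def degIn {W : Type*} (G : SimpleGraph W) (T : Set W) (v : W) : ℕ :=
  (T ∩ G.neighborSet v).ncard

/-- `G[S]` is a proportionally dense subgraph. -/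
def IsPDS {W : Type*} (G : SimpleGraph W) (S : Set W) : Prop :=
  S ⊂ Set.univ ∧ 2 ≤ S.ncard ∧
    ∀ u ∈ S, degIn G Sᶜ u * (S.ncard - 1) ≤ degIn G S u * Sᶜ.ncard

/-- A star is a complete bipartite graph `K_{1,ℓ}`, `ℓ ≥ 1`. -/
def IsStar {V : Type*} (G : SimpleGraph V) : Prop :=
  ∃ ℓ : ℕ, 1 ≤ ℓ ∧ Nonempty (G ≃g completeBipartiteGraph Unit (Fin ℓ))

/-- Vertex type of the split graph `σ(G)`: `z1, z2` (the two booleans), `M` (edge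
vertices), and `N = V`. -/
abbrev SigmaVert (V : Type*) (G : SimpleGraph V) : Type _ := (Bool ⊕ ↥G.edgeSet) ⊕ V

/-- The split graph `σ(G)`. -/
def sigmaGraph {V : Type*} (G : SimpleGraph V) : SimpleGraph (SigmaVert V G) where
  Adj x y :=
    match x, y with
    | Sum.inl a, Sum.inl b => a ≠ b
    | Sum.inl (Sum.inr e), Sum.inr u => u ∉ (e : Sym2 V)
    | Sum.inr u, Sum.inl (Sum.inr e) => u ∉ (e : Sym2 V)
    | _, _ => False
  symm := by
    constructor
    rintro ((a | e) | u) ((b | f) | v) h <;> simp_all <;> tauto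
  loopless := by
    constructor
    rintro ((a | e) | u) h <;> simp_all

/-- The set `M ∪ {z1, z2}` (the clique side) in `σ(G)`. -/
def sigmaClique {V : Type*} (G : SimpleGraph V) : Set (SigmaVert V G) :=
  Set.range Sum.inl

/-- The set `M` of edge-vertices in `σ(G)`. -/
def sigmaM {V : Type*} (G : SimpleGraph V) : Set (SigmaVert V G) :=
  Set.range (fun e : ↥G.edgeSet => Sum.inl (Sum.inr e))

/-- Lemma 1 of the paper: with `M ∪ {z1,z2} ⊆ S ⊊ V'`, a vertex `e ∈ M` is
satisfied in `σ(G)[S]` iff `d_S(e) ≥ |S| - 2`. -/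
lemma nbhd_eq {V : Type*} (G : SimpleGraph V) (e : ↥G.edgeSet) (u v : V)
    (huv : (e : Sym2 V) = s(u, v)) :
    (sigmaGraph G).neighborSet (Sum.inl (Sum.inr e)) =
      ({Sum.inl (Sum.inr e), Sum.inr u, Sum.inr v} : Set (SigmaVert V G))ᶜ := by
  ext x
  rcases x with (b | f) | w
  · simp [sigmaGraph, neighborSet]
  · simp only [SimpleGraph.mem_neighborSet, sigmaGraph, Set.mem_compl_iff,
      Set.mem_insert_iff, Set.mem_singleton_iff]
    simp only [Sum.inl.injEq, Sum.inr.injEq, reduceCtorEq, or_false, ne_eq]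
    exact ne_comm
  · simp only [SimpleGraph.mem_neighborSet, sigmaGraph, Set.mem_compl_iff,
      Set.mem_insert_iff, Set.mem_singleton_iff, huv, Sym2.mem_iff]
    push_neg
    simp [eq_comm]

lemma ncard_inter_compl {α : Type*} [Finite α] (A B : Set α) :
    (A ∩ Bᶜ).ncard = A.ncard - (A ∩ B).ncard := by
  have h : A ∩ Bᶜ = A \ (A ∩ B) := by ext x; simp [Set.mem_diff]
  rw [h, Set.ncard_diff Set.inter_subset_left]

lemma arA (s c : ℕ) (hs : 3 ≤ s) (hc : 1 ≤ c) : ¬ (c * (s - 1) ≤ (s - 3) * c) := by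
  intro h
  obtain ⟨c', rfl⟩ : ∃ c', c = c' + 1 := ⟨c - 1, by omega⟩
  obtain ⟨s', rfl⟩ : ∃ s', s = s' + 3 := ⟨s - 3, by omega⟩
  have e1 : s' + 3 - 1 = s' + 2 := by omega
  have e2 : s' + 3 - 3 = s' := by omega
  rw [e1, e2] at h
  nlinarith

lemma arB (s c : ℕ) (hs : 3 ≤ s) (hc : 1 ≤ c) (hcs : c < s) :
    (c - 1) * (s - 1) ≤ (s - 2) * c := by
  obtain ⟨c', rfl⟩ : ∃ c', c = c' + 1 := ⟨c - 1, by omega⟩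
  obtain ⟨s', rfl⟩ : ∃ s', s = s' + 3 := ⟨s - 3, by omega⟩
  have e1 : c' + 1 - 1 = c' := by omega
  have e2 : s' + 3 - 1 = s' + 2 := by omega
  have e3 : s' + 3 - 2 = s' + 1 := by omega
  rw [e1, e2, e3]
  nlinarith


lemma conn_card {V : Type*} [Fintype V] (G : SimpleGraph V) (h : G.Connected) :
    Fintype.card V ≤ Nat.card G.edgeSet + 1 := by
  classical
  obtain ⟨r⟩ := h.nonempty
  have step : ∀ v : V, v ≠ r → ∃ u, G.Adj v u ∧ G.dist u r < G.dist v r := by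
    intro v hv
    obtain ⟨p, hp⟩ := h.exists_walk_length_eq_dist v r
    cases p with
    | nil => exact absurd rfl hv
    | cons hadj q =>
      refine ⟨_, hadj, ?_⟩
      have h1 : G.dist _ r ≤ q.length := SimpleGraph.dist_le q
      simp only [SimpleGraph.Walk.length_cons] at hp
      omega
  choose u hu1 hu2 using step
  let f : {v : V // v ≠ r} → G.edgeSet := fun v => ⟨s(v.1, u v.1 v.2), (hu1 v.1 v.2)⟩
  have hinj : Function.Injective f := by
    rintro ⟨v, hv⟩ ⟨w, hw⟩ hvw
    replace hvw : (v = w ∧ u v hv = u w hw) ∨ (v = u w hw ∧ u v hv = w) := Sym2.eq_iff.mp (congrArg Subtype.val hvw)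
    rcases hvw with ⟨h1, h2⟩ | ⟨h1, h2⟩
    · exact Subtype.ext h1
    · exfalso
      have a := hu2 v hv
      rw [h2] at a
      have b := hu2 w hw
      rw [← h1] at b
      omega
  have hle := Nat.card_le_card_of_injective f hinj
  have hc : Nat.card {v : V // v ≠ r} = Fintype.card V - 1 := by
    rw [Nat.card_eq_fintype_card, Fintype.card_subtype_compl, Fintype.card_subtype_eq]
  have : Nonempty V := ⟨r⟩
  have : 1 ≤ Fintype.card V := Fintype.card_pos
  omega

theorem sigma_M_satisfied_iff {V : Type*} [Fintype V] (G : SimpleGraph V)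
    (hconn : G.Connected) (hstar : ¬ IsStar G)
    (S : Set (SigmaVert V G)) (hSne : S ⊂ Set.univ)
    (hMZ : sigmaClique G ⊆ S) (e : ↥G.edgeSet) :
    (degIn (sigmaGraph G) Sᶜ (Sum.inl (Sum.inr e)) * (S.ncard - 1)
        ≤ degIn (sigmaGraph G) S (Sum.inl (Sum.inr e)) * Sᶜ.ncard)
      ↔ S.ncard - 2 ≤ degIn (sigmaGraph G) S (Sum.inl (Sum.inr e)) := by
  classical
  obtain ⟨⟨u, v⟩, huv0⟩ := Quot.exists_rep (e : Sym2 V)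
  have huv : (e : Sym2 V) = s(u, v) := huv0.symm
  have hadj : G.Adj u v := by have h2 := e.2; rwa [huv, SimpleGraph.mem_edgeSet] at h2
  have hne : u ≠ v := hadj.ne
  set x : SigmaVert V G := Sum.inl (Sum.inr e) with hx
  set T : Set (SigmaVert V G) := {x, Sum.inr u, Sum.inr v} with hT
  have hxS : x ∈ S := hMZ ⟨Sum.inr e, rfl⟩
  have hdS : degIn (sigmaGraph G) S x = S.ncard - (S ∩ T).ncard := by
    rw [degIn, nbhd_eq G e u v huv, ncard_inter_compl]
  have hdC : degIn (sigmaGraph G) Sᶜ x = Sᶜ.ncard - (Sᶜ ∩ T).ncard := by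
    rw [degIn, nbhd_eq G e u v huv, ncard_inter_compl]
  have hc1 : 1 ≤ Sᶜ.ncard := by
    obtain ⟨y, -, hy⟩ := Set.exists_of_ssubset hSne
    exact (Set.ncard_pos (Set.toFinite _)).2 ⟨y, hy⟩
  have hclique : (sigmaClique G).ncard = 2 + Nat.card G.edgeSet := by
    rw [sigmaClique, ← Nat.card_coe_set_eq, Nat.card_range_of_injective Sum.inl_injective,
      Nat.card_sum]
    simp
  have hSclique : (sigmaClique G).ncard ≤ S.ncard := Set.ncard_le_ncard hMZ (Set.toFinite S)
  have : Nonempty G.edgeSet := ⟨e⟩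
  have hE1 : 1 ≤ Nat.card G.edgeSet := Nat.card_pos
  have hs3 : 3 ≤ S.ncard := by omega
  have hcV : Sᶜ.ncard ≤ Fintype.card V := by
    have hsub : Sᶜ ⊆ Set.range (Sum.inr : V → SigmaVert V G) := by
      rintro ((b | f) | w) hy
      · exact absurd (hMZ ⟨Sum.inl b, rfl⟩) hy
      · exact absurd (hMZ ⟨Sum.inr f, rfl⟩) hy
      · exact ⟨w, rfl⟩
    calc Sᶜ.ncard ≤ (Set.range (Sum.inr : V → SigmaVert V G)).ncard :=
          Set.ncard_le_ncard hsub (Set.toFinite _)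
      _ = Fintype.card V := by
          rw [← Nat.card_coe_set_eq, Nat.card_range_of_injective Sum.inr_injective,
            Nat.card_eq_fintype_card]
  have hcs : Sᶜ.ncard < S.ncard := by
    have := conn_card G hconn
    omega
  have hTu : (Sum.inr u : SigmaVert V G) ≠ Sum.inr v := by simp [hne]
  have hTx1 : x ≠ Sum.inr u := by simp [hx]
  have hTx2 : x ≠ Sum.inr v := by simp [hx]
  by_cases hu : Sum.inr u ∈ S <;> by_cases hv : Sum.inr v ∈ S
  · have e1 : S ∩ T = T := Set.inter_eq_self_of_subset_right (by
      intro y hy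
      rcases hy with rfl | rfl | rfl
      exacts [hxS, hu, hv])
    have e2 : Sᶜ ∩ T = ∅ := by
      ext y
      simp only [Set.mem_inter_iff, Set.mem_compl_iff, Set.mem_empty_iff_false, iff_false,
        not_and]
      intro hy hyT
      rcases hyT with rfl | rfl | rfl
      exacts [hy hxS, hy hu, hy hv]
    have e3 : T.ncard = 3 := by
      rw [hT, Set.ncard_insert_of_notMem (by simp [hTx1, hTx2]),
        Set.ncard_pair hTu]
    rw [hdS, hdC, e1, e2, e3, Set.ncard_empty, Nat.sub_zero]
    exact iff_of_false (arA _ _ hs3 hc1) (by omega)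
  · have e1 : S ∩ T = {x, Sum.inr u} := by
      ext y
      simp only [Set.mem_inter_iff, hT, Set.mem_insert_iff, Set.mem_singleton_iff]
      constructor
      · rintro ⟨hyS, rfl | rfl | rfl⟩
        exacts [Or.inl rfl, Or.inr rfl, absurd hyS hv]
      · rintro (rfl | rfl)
        exacts [⟨hxS, Or.inl rfl⟩, ⟨hu, Or.inr (Or.inl rfl)⟩]
    have e2 : Sᶜ ∩ T = {Sum.inr v} := by
      ext y
      simp only [Set.mem_inter_iff, hT, Set.mem_insert_iff, Set.mem_singleton_iff,
        Set.mem_compl_iff]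
      constructor
      · rintro ⟨hyS, rfl | rfl | rfl⟩
        exacts [absurd hxS hyS, absurd hu hyS, rfl]
      · rintro rfl
        exact ⟨hv, Or.inr (Or.inr rfl)⟩
    rw [hdS, hdC, e1, e2, Set.ncard_pair hTx1, Set.ncard_singleton]
    exact iff_of_true (arB _ _ hs3 hc1 hcs) (by omega)
  · have e1 : S ∩ T = {x, Sum.inr v} := by
      ext y
      simp only [Set.mem_inter_iff, hT, Set.mem_insert_iff, Set.mem_singleton_iff]
      constructor
      · rintro ⟨hyS, rfl | rfl | rfl⟩
        exacts [Or.inl rfl, absurd hyS hu, Or.inr rfl]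
      · rintro (rfl | rfl)
        exacts [⟨hxS, Or.inl rfl⟩, ⟨hv, Or.inr (Or.inr rfl)⟩]
    have e2 : Sᶜ ∩ T = {Sum.inr u} := by
      ext y
      simp only [Set.mem_inter_iff, hT, Set.mem_insert_iff, Set.mem_singleton_iff,
        Set.mem_compl_iff]
      constructor
      · rintro ⟨hyS, rfl | rfl | rfl⟩
        exacts [absurd hxS hyS, rfl, absurd hv hyS]
      · rintro rfl
        exact ⟨hu, Or.inr (Or.inl rfl)⟩
    rw [hdS, hdC, e1, e2, Set.ncard_pair hTx2, Set.ncard_singleton]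
    exact iff_of_true (arB _ _ hs3 hc1 hcs) (by omega)
  · have e1 : S ∩ T = {x} := by
      ext y
      simp only [Set.mem_inter_iff, hT, Set.mem_insert_iff, Set.mem_singleton_iff]
      constructor
      · rintro ⟨hyS, rfl | rfl | rfl⟩
        exacts [rfl, absurd hyS hu, absurd hyS hv]
      · rintro rfl
        exact ⟨hxS, Or.inl rfl⟩
    have e2 : Sᶜ ∩ T = {Sum.inr u, Sum.inr v} := by
      ext y
      simp only [Set.mem_inter_iff, hT, Set.mem_insert_iff, Set.mem_singleton_iff,
        Set.mem_compl_iff]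
      constructor
      · rintro ⟨hyS, rfl | rfl | rfl⟩
        exacts [absurd hxS hyS, Or.inl rfl, Or.inr rfl]
      · rintro (rfl | rfl)
        exacts [⟨hu, Or.inr (Or.inl rfl)⟩, ⟨hv, Or.inr (Or.inr rfl)⟩]
    rw [hdS, hdC, e1, e2, Set.ncard_singleton, Set.ncard_pair hTu]
    refine iff_of_true ?_ (by omega)
    exact (Nat.mul_le_mul_right _ (Nat.sub_le _ _)).trans (le_of_eq (Nat.mul_comm _ _))
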